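/- For every N ∈ ℕ ∪ {0} there exists a constant C > 0, depending only on N, such that for every ε ∈ (0,1) there is a twice continuously differentiable function c : (0, ε^{−1}) → ℝ satisfying c''(r) + c'(r)/r + 8(N+1)² r^{2N}(1+r^{2N+2})^{−2} c(r) = −ε² r^{2N+2}(1+r^{2N+2})^{−2} for all 0 < r < ε^{−1}, with lim_{r→0⁺} c(r) = 0, lim_{r→0⁺} c'(r) = 0, and |c(r)| ≤ C·ε²·(log(2+r))² for all 0 < r < ε^{−1}. -/

import Mathlib

open Filter Topology MeasureTheory intervalIntegral

namespace Stmt15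

noncomputable section
variable (N : ℕ)

def q (s : ℝ) : ℝ := s ^ (2*N+2)
def P (s : ℝ) : ℝ := 1 + q N s
def phi (s : ℝ) : ℝ := s * q N s / (P N s)^2
def z0 (s : ℝ) : ℝ := (1 - q N s) / (P N s)
def z1 (s : ℝ) : ℝ := z0 N s * Real.log s + 1/((N:ℝ)+1)
def psi (s : ℝ) : ℝ := z0 N s * (s * Real.log s) * q N s / (P N s)^2 + (1/((N:ℝ)+1)) * phi N s
def A (r : ℝ) : ℝ := ∫ s in (0:ℝ)..r, psi N s
def B (r : ℝ) : ℝ := ∫ s in (0:ℝ)..r, z0 N s * phi N s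
def kk : ℝ := 2*(N:ℝ)+2
def z0d (r : ℝ) : ℝ := -2*(kk N) * q N r / (r * (P N r)^2)
def z1d (r : ℝ) : ℝ := z0d N r * Real.log r + z0 N r / r
def z0dd (r : ℝ) : ℝ := -2*(kk N) * ((kk N - 1) * q N r / (r^2 * (P N r)^2) - 2*(kk N)*(q N r)^2/(r^2*(P N r)^3))
def z1dd (r : ℝ) : ℝ := z0dd N r * Real.log r + 2 * z0d N r / r - z0 N r / r^2

lemma q_nonneg (s : ℝ) : 0 ≤ q N s := by
  rw [q, show 2*N+2 = (N+1)*2 by ring, pow_mul]; positivity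

lemma P_pos (s : ℝ) : 0 < P N s := by have := q_nonneg N s; rw [P]; linarith

lemma P_ne (s : ℝ) : P N s ≠ 0 := (P_pos N s).ne'

lemma continuous_q : Continuous (q N) := continuous_pow _
lemma continuous_P : Continuous (P N) := continuous_const.add (continuous_q N)
lemma continuous_phi : Continuous (phi N) :=
  (continuous_id.mul (continuous_q N)).div ((continuous_P N).pow 2)
    (fun s => pow_ne_zero _ (P_ne N s))
lemma continuous_z0 : Continuous (z0 N) :=
  (continuous_const.sub (continuous_q N)).div (continuous_P N) (P_ne N)
lemma continuous_psi : Continuous (psi N) := by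
  refine (((((continuous_z0 N).mul Real.continuous_mul_log).mul (continuous_q N)).div
    ((continuous_P N).pow 2) (fun s => pow_ne_zero _ (P_ne N s))).add
    (continuous_const.mul (continuous_phi N)))
lemma continuous_z0phi : Continuous (fun s => z0 N s * phi N s) :=
  (continuous_z0 N).mul (continuous_phi N)

lemma hN1 : ((N:ℝ)+1) ≠ 0 := by positivity

lemma psi_eq (s : ℝ) : psi N s = z1 N s * phi N s := by
  rw [psi, z1, phi]
  field_simp [hN1, P_ne]

lemma hasDerivAt_A (r : ℝ) : HasDerivAt (A N) (psi N r) r :=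
  intervalIntegral.integral_hasDerivAt_right ((continuous_psi N).intervalIntegrable _ _)
    ((continuous_psi N).stronglyMeasurableAtFilter _ _) (continuous_psi N).continuousAt

lemma hasDerivAt_B (r : ℝ) : HasDerivAt (B N) (z0 N r * phi N r) r :=
  intervalIntegral.integral_hasDerivAt_right ((continuous_z0phi N).intervalIntegrable _ _)
    ((continuous_z0phi N).stronglyMeasurableAtFilter _ _) (continuous_z0phi N).continuousAt

lemma hasDerivAt_q (r : ℝ) : HasDerivAt (q N) ((2*N+2) * r^(2*N+1)) r := by
  show HasDerivAt (fun x => x ^ (2*N+2)) _ r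
  simpa using hasDerivAt_pow (2*N+2) r

lemma hasDerivAt_z0 (r : ℝ) (hr : r ≠ 0) : HasDerivAt (z0 N) (z0d N r) r := by
  have hq := hasDerivAt_q N r
  have hP : HasDerivAt (P N) ((2*N+2) * r^(2*N+1)) r := by
    exact hq.const_add 1
  have h := ((hasDerivAt_const r (1:ℝ)).sub hq).div hP (P_ne N r)
  refine h.congr_deriv ?_
  symm
  simp only [Pi.sub_apply]
  have e : r ^ (2*N+1) = q N r / r := by rw [q, eq_div_iff hr]; ring
  have hP1 : P N r = 1 + q N r := rfl
  have h1Q : (1:ℝ) + q N r ≠ 0 := hP1 ▸ P_ne N r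
  rw [z0d, kk, e, hP1]
  field_simp
  ring

lemma hasDerivAt_z0d (r : ℝ) (hr : r ≠ 0) : HasDerivAt (z0d N) (z0dd N r) r := by
  have hq := hasDerivAt_q N r
  have hP : HasDerivAt (P N) ((2*N+2) * r^(2*N+1)) r := by
    exact hq.const_add 1
  have hden : HasDerivAt (fun s => s * (P N s)^2)
      ((P N r)^2 + r * (2*(P N r) * ((2*N+2) * r^(2*N+1)))) r := by
    exact ((hasDerivAt_id' r).mul (hP.pow 2)).congr_deriv (by simp)
  have hnum : HasDerivAt (fun s => -2*(kk N) * q N s) (-2*(kk N) * ((2*N+2) * r^(2*N+1))) r :=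
    hq.const_mul _
  have hdne : r * (P N r)^2 ≠ 0 := mul_ne_zero hr (pow_ne_zero _ (P_ne N r))
  have h := hnum.div hden hdne
  have : HasDerivAt (z0d N) ((-2*(kk N) * ((2*N+2) * r^(2*N+1)) * (r * (P N r)^2) -
      -2*(kk N) * q N r * ((P N r)^2 + r * (2*(P N r) * ((2*N+2) * r^(2*N+1))))) / (r * (P N r)^2)^2) r := by
    exact h
  convert this using 1
  have e : r ^ (2*N+1) = q N r / r := by rw [q, eq_div_iff hr]; ring
  have hP1 : P N r = 1 + q N r := rfl
  have h1Q : (1:ℝ) + q N r ≠ 0 := hP1 ▸ P_ne N r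
  rw [z0dd, kk, e, hP1]
  field_simp
  ring

lemma hasDerivAt_z1 (r : ℝ) (hr : r ≠ 0) : HasDerivAt (z1 N) (z1d N r) r := by
  have h := ((hasDerivAt_z0 N r hr).mul (Real.hasDerivAt_log hr)).add_const (1/((N:ℝ)+1))
  have h2 : HasDerivAt (z1 N) (z0d N r * Real.log r + z0 N r * r⁻¹) r := h
  convert h2 using 1
  rw [z1d, div_eq_mul_inv]

lemma hasDerivAt_z1d (r : ℝ) (hr : r ≠ 0) : HasDerivAt (z1d N) (z1dd N r) r := by
  have h := ((hasDerivAt_z0d N r hr).mul (Real.hasDerivAt_log hr)).add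
    ((hasDerivAt_z0 N r hr).div (hasDerivAt_id r) hr)
  have h2 : HasDerivAt (z1d N)
      (z0dd N r * Real.log r + z0d N r * r⁻¹ + (z0d N r * r - z0 N r * 1) / r^2) r := by
    have e : z1d N = fun s => z0d N s * Real.log s + z0 N s / s := rfl
    rw [e]; exact h
  convert h2 using 1
  rw [z1dd]; field_simp; ring

def W (r : ℝ) : ℝ := 8 * ((N:ℝ) + 1)^2 * r ^ (2*N) / (1 + r ^ (2*N+2))^2

lemma I1 (r : ℝ) (hr : r ≠ 0) : z0dd N r + z0d N r / r + W N r * z0 N r = 0 := by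
  have e : r ^ (2*N) = q N r / r^2 := by rw [q, eq_div_iff (pow_ne_zero 2 hr)]; ring
  have hP1 : (1:ℝ) + r ^ (2*N+2) = 1 + q N r := rfl
  have h1Q : (1:ℝ) + q N r ≠ 0 := P_ne N r
  rw [z0dd, z0d, W, z0, kk, e, hP1, show P N r = 1 + q N r from rfl]
  field_simp
  ring

lemma I2 (r : ℝ) (hr : r ≠ 0) : z1dd N r + z1d N r / r + W N r * z1 N r = 0 := by
  have h1 := I1 N r hr
  have e : r ^ (2*N) = q N r / r^2 := by rw [q, eq_div_iff (pow_ne_zero 2 hr)]; ring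
  have hP1 : (1:ℝ) + r ^ (2*N+2) = 1 + q N r := rfl
  have h1Q : (1:ℝ) + q N r ≠ 0 := P_ne N r
  have hN' : ((N:ℝ)+1) ≠ 0 := hN1 N
  rw [z0dd, z0d, W, z0, kk, e, hP1, show P N r = 1 + q N r from rfl] at h1
  rw [z1dd, z1d, z1, z0dd, z0d, W, z0, kk, e, hP1, show P N r = 1 + q N r from rfl]
  field_simp at h1 ⊢
  nlinarith [h1, sq_nonneg r, sq_nonneg (1 + q N r)]

lemma I3 (r : ℝ) (hr : r ≠ 0) :
    z0d N r * psi N r - z1d N r * (z0 N r * phi N r) = - phi N r / r := by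
  rw [psi_eq]
  have key : z0d N r * z1 N r - z1d N r * z0 N r = -1/r := by
    have h1Q : (1:ℝ) + q N r ≠ 0 := P_ne N r
    rw [z1d, z1, z0d, z0, kk, show P N r = 1 + q N r from rfl]
    have hN' : ((N:ℝ)+1) ≠ 0 := hN1 N
    field_simp
    ring
  have : z0d N r * (z1 N r * phi N r) - z1d N r * (z0 N r * phi N r)
      = (z0d N r * z1 N r - z1d N r * z0 N r) * phi N r := by ring
  rw [this, key]
  ring

variable (ε : ℝ)

def c (r : ℝ) : ℝ := ε^2 * (z0 N r * A N r - z1 N r * B N r)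
def cd (r : ℝ) : ℝ := ε^2 * (z0d N r * A N r - z1d N r * B N r)
def cdd (r : ℝ) : ℝ := ε^2 * (z0dd N r * A N r + z0d N r * psi N r
    - z1dd N r * B N r - z1d N r * (z0 N r * phi N r))

lemma hasDerivAt_c (r : ℝ) (hr : r ≠ 0) : HasDerivAt (c N ε) (cd N ε r) r := by
  have h := (((hasDerivAt_z0 N r hr).mul (hasDerivAt_A N r)).sub
    ((hasDerivAt_z1 N r hr).mul (hasDerivAt_B N r))).const_mul (ε^2)
  have h2 : HasDerivAt (c N ε)
      (ε^2 * (z0d N r * A N r + z0 N r * psi N r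
        - (z1d N r * B N r + z1 N r * (z0 N r * phi N r)))) r := h
  convert h2 using 1
  rw [cd, psi_eq]
  ring

lemma hasDerivAt_cd (r : ℝ) (hr : r ≠ 0) : HasDerivAt (cd N ε) (cdd N ε r) r := by
  have h := (((hasDerivAt_z0d N r hr).mul (hasDerivAt_A N r)).sub
    ((hasDerivAt_z1d N r hr).mul (hasDerivAt_B N r))).const_mul (ε^2)
  have h2 : HasDerivAt (cd N ε)
      (ε^2 * (z0dd N r * A N r + z0d N r * psi N r
        - (z1dd N r * B N r + z1d N r * (z0 N r * phi N r)))) r := h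
  convert h2 using 1
  rw [cdd]; ring

lemma ode (r : ℝ) (hr : 0 < r) :
    cdd N ε r + cd N ε r / r + W N r * c N ε r
      = -(ε^2) * r ^ (2*N+2) / (1 + r ^ (2*N+2))^2 := by
  have h1 := I1 N r hr.ne'
  have h2 := I2 N r hr.ne'
  have h3 := I3 N r hr.ne'
  have expand : cdd N ε r + cd N ε r / r + W N r * c N ε r
      = ε^2 * ((z0dd N r + z0d N r / r + W N r * z0 N r) * A N r
        - (z1dd N r + z1d N r / r + W N r * z1 N r) * B N r
        + (z0d N r * psi N r - z1d N r * (z0 N r * phi N r))) := by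
    rw [cdd, cd, c]; ring
  rw [expand, h1, h2, h3]
  have hphi : phi N r / r = r ^ (2*N+2) / (1 + r ^ (2*N+2))^2 := by
    rw [phi, show P N r = 1 + q N r from rfl, show q N r = r ^ (2*N+2) from rfl]
    have h1Q : (1:ℝ) + r ^ (2*N+2) ≠ 0 := P_ne N r
    field_simp
  rw [div_eq_mul_inv, neg_mul, ← div_eq_mul_inv] at *
  rw [hphi]
  ring

lemma contOn_log : ContinuousOn Real.log (Set.Ioi 0) :=
  Real.continuousOn_log.mono (fun x hx => by
    simp only [Set.mem_compl_iff, Set.mem_singleton_iff]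
    exact ne_of_gt (Set.mem_Ioi.mp hx))

lemma rP_ne {r : ℝ} (hr : r ∈ Set.Ioi (0:ℝ)) : r * (P N r)^2 ≠ 0 :=
  mul_ne_zero (ne_of_gt hr) (pow_ne_zero _ (P_ne N r))

lemma contOn_z0d : ContinuousOn (z0d N) (Set.Ioi 0) := by
  apply ContinuousOn.div (Continuous.continuousOn (by have := continuous_q N; continuity))
    (ContinuousOn.mul continuousOn_id (Continuous.continuousOn ((continuous_P N).pow 2)))
  exact fun r hr => rP_ne N hr

lemma contOn_z0dd : ContinuousOn (z0dd N) (Set.Ioi 0) := by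
  apply ContinuousOn.mul continuousOn_const
  apply ContinuousOn.sub
  · apply ContinuousOn.div (Continuous.continuousOn (by have := continuous_q N; continuity))
      (ContinuousOn.mul (continuousOn_pow 2) (Continuous.continuousOn ((continuous_P N).pow 2)))
    exact fun r hr => mul_ne_zero (pow_ne_zero _ (ne_of_gt hr)) (pow_ne_zero _ (P_ne N r))
  · apply ContinuousOn.div (Continuous.continuousOn (by have := continuous_q N; continuity))
      (ContinuousOn.mul (continuousOn_pow 2) (Continuous.continuousOn ((continuous_P N).pow 3)))
    exact fun r hr => mul_ne_zero (pow_ne_zero _ (ne_of_gt hr)) (pow_ne_zero _ (P_ne N r))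

lemma contOn_z1d : ContinuousOn (z1d N) (Set.Ioi 0) := by
  apply ContinuousOn.add ((contOn_z0d N).mul (contOn_log))
  exact ContinuousOn.div ((continuous_z0 N).continuousOn) continuousOn_id
    (fun r hr => ne_of_gt hr)

lemma contOn_z1dd : ContinuousOn (z1dd N) (Set.Ioi 0) := by
  apply ContinuousOn.sub
  · apply ContinuousOn.add ((contOn_z0dd N).mul (contOn_log))
    exact ContinuousOn.div (continuousOn_const.mul (contOn_z0d N)) continuousOn_id
      (fun r hr => ne_of_gt hr)
  · exact ContinuousOn.div ((continuous_z0 N).continuousOn) (continuousOn_pow 2)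
      (fun r hr => pow_ne_zero _ (ne_of_gt hr))

lemma continuous_A : Continuous (A N) := by
  have : Differentiable ℝ (A N) := fun r => (hasDerivAt_A N r).differentiableAt
  exact this.continuous

lemma continuous_B : Continuous (B N) := by
  have : Differentiable ℝ (B N) := fun r => (hasDerivAt_B N r).differentiableAt
  exact this.continuous

lemma contOn_cdd : ContinuousOn (cdd N ε) (Set.Ioi 0) := by
  apply ContinuousOn.mul continuousOn_const
  apply ContinuousOn.sub
  apply ContinuousOn.sub
  · exact ((contOn_z0dd N).mul (continuous_A N).continuousOn).add
      ((contOn_z0d N).mul (continuous_psi N).continuousOn)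
  · exact (contOn_z1dd N).mul (continuous_B N).continuousOn
  · exact (contOn_z1d N).mul ((continuous_z0phi N).continuousOn)

lemma deriv_c_eq : Set.EqOn (deriv (c N ε)) (cd N ε) (Set.Ioi 0) :=
  fun r hr => (hasDerivAt_c N ε r (ne_of_gt hr)).deriv

lemma deriv_cd_eq : Set.EqOn (deriv (cd N ε)) (cdd N ε) (Set.Ioi 0) :=
  fun r hr => (hasDerivAt_cd N ε r (ne_of_gt hr)).deriv

lemma contDiffOn_c : ContDiffOn ℝ 2 (c N ε) (Set.Ioi 0) := by
  rw [show (2: WithTop ℕ∞) = 1+1 from by norm_num,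
    contDiffOn_succ_iff_deriv_of_isOpen isOpen_Ioi]
  refine ⟨fun r hr => ((hasDerivAt_c N ε r (ne_of_gt hr)).differentiableAt).differentiableWithinAt,
    by simp, ?_⟩
  apply ContDiffOn.congr _ (deriv_c_eq N ε)
  rw [show (1: WithTop ℕ∞) = 0+1 from by norm_num,
    contDiffOn_succ_iff_deriv_of_isOpen isOpen_Ioi]
  refine ⟨fun r hr => ((hasDerivAt_cd N ε r (ne_of_gt hr)).differentiableAt).differentiableWithinAt,
    by simp, ?_⟩
  rw [contDiffOn_zero]
  exact ContinuousOn.congr (contOn_cdd N ε) (deriv_cd_eq N ε)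

lemma deriv2_c {r : ℝ} (hr : 0 < r) : deriv (deriv (c N ε)) r = cdd N ε r := by
  have h : deriv (c N ε) =ᶠ[nhds r] cd N ε :=
    Filter.eventuallyEq_of_mem (isOpen_Ioi.mem_nhds hr) (deriv_c_eq N ε)
  rw [h.deriv_eq]
  exact (hasDerivAt_cd N ε r (ne_of_gt hr)).deriv

lemma abs_z0_le (s : ℝ) : |z0 N s| ≤ 1 := by
  rw [z0, abs_div, abs_of_pos (P_pos N s), div_le_one (P_pos N s)]
  have h := q_nonneg N s
  rw [P]
  rcases abs_cases (1 - q N s) with ⟨he, _⟩ | ⟨he, _⟩ <;> rw [he] <;> linarith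

lemma q_le_one {s : ℝ} (h0 : 0 ≤ s) (h1 : s ≤ 1) : q N s ≤ 1 := by
  rw [q]; exact pow_le_one₀ h0 h1

lemma one_le_P (s : ℝ) : 1 ≤ P N s := by have := q_nonneg N s; rw [P]; linarith

lemma phi_nonneg {s : ℝ} (h0 : 0 ≤ s) : 0 ≤ phi N s := by
  rw [phi]
  exact div_nonneg (mul_nonneg h0 (q_nonneg N s)) (pow_nonneg (P_pos N s).le 2)

lemma phi_le_s {s : ℝ} (h0 : 0 ≤ s) (h1 : s ≤ 1) : phi N s ≤ s := by
  rw [phi]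
  have h2 : s * q N s / (P N s)^2 ≤ s * q N s := by
    apply div_le_self (mul_nonneg h0 (q_nonneg N s))
    have := one_le_P N s; nlinarith
  have h3 : s * q N s ≤ s * 1 := by
    apply mul_le_mul_of_nonneg_left (q_le_one N h0 h1) h0
  linarith

lemma sq_le_q {s : ℝ} (h1 : 1 ≤ s) : s^2 ≤ q N s := by
  rw [q]
  calc s^2 = s^2 * 1 := by ring
  _ ≤ s^2 * s^(2*N) := by
      apply mul_le_mul_of_nonneg_left (one_le_pow₀ h1) (by positivity)
  _ = s^(2*N+2) := by ring

lemma q_le_P (s : ℝ) : q N s ≤ P N s := by rw [P]; linarith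

lemma phi_le_inv {s : ℝ} (h1 : 1 ≤ s) : phi N s ≤ 1/s := by
  have hs : (0:ℝ) < s := lt_of_lt_of_le one_pos h1
  have hq : (1:ℝ) ≤ q N s := le_trans (by nlinarith) (sq_le_q N h1)
  have hP2 : q N s ^ 2 ≤ (P N s)^2 := by
    apply pow_le_pow_left₀ (by linarith) (q_le_P N s)
  rw [phi]
  calc s * q N s / (P N s)^2 ≤ s * q N s / (q N s)^2 := by
        apply div_le_div_of_nonneg_left (by positivity) (by positivity) hP2
  _ = s / q N s := by field_simp
  _ ≤ s / s^2 := by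
        apply div_le_div_of_nonneg_left (by linarith) (by nlinarith) (sq_le_q N h1)
  _ = 1/s := by field_simp

lemma qP2_le_one (s : ℝ) : q N s / (P N s)^2 ≤ 1 := by
  rw [div_le_one (pow_pos (P_pos N s) 2)]
  have h1 := q_le_P N s
  have h2 := one_le_P N s
  nlinarith

lemma slog_le_one {s : ℝ} (h0 : 0 < s) (h1 : s ≤ 1) : s * |Real.log s| ≤ 1 := by
  have hl : Real.log s ≤ 0 := Real.log_nonpos (le_of_lt h0) h1
  rw [abs_of_nonpos hl]
  have h2 : Real.log s⁻¹ ≤ s⁻¹ - 1 := Real.log_le_sub_one_of_pos (by positivity)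
  rw [Real.log_inv] at h2
  have h3 : -Real.log s ≤ s⁻¹ := by linarith
  calc s * -Real.log s ≤ s * s⁻¹ := mul_le_mul_of_nonneg_left h3 (le_of_lt h0)
  _ = 1 := mul_inv_cancel₀ (ne_of_gt h0)

lemma inv_N1_le_one : 1/((N:ℝ)+1) ≤ 1 := by
  rw [div_le_one (by positivity)]; simp

lemma abs_psi_le_two {s : ℝ} (h0 : 0 < s) (h1 : s ≤ 1) : |psi N s| ≤ 2 := by
  rw [psi]
  have h2 : |z0 N s * (s * Real.log s) * q N s / (P N s)^2| ≤ 1 := by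
    rw [abs_div, abs_of_pos (pow_pos (P_pos N s) 2)]
    rw [div_le_one (pow_pos (P_pos N s) 2)]
    calc |z0 N s * (s * Real.log s) * q N s|
        = |z0 N s| * (s * |Real.log s|) * q N s := by
          rw [abs_mul, abs_mul, abs_mul, abs_of_pos h0, abs_of_nonneg (q_nonneg N s)]
    _ ≤ 1 * q N s := by
          apply mul_le_mul_of_nonneg_right _ (q_nonneg N s)
          have hb : (0:ℝ) ≤ s * |Real.log s| := by positivity
          nlinarith [abs_z0_le N s, slog_le_one h0 h1, abs_nonneg (z0 N s)]
    _ = q N s := by ring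
    _ ≤ (P N s)^2 := by have := q_le_P N s; have := one_le_P N s; nlinarith
  have h3 : |1/((N:ℝ)+1) * phi N s| ≤ 1 := by
    rw [abs_mul, abs_of_nonneg (by positivity : (0:ℝ) ≤ 1/((N:ℝ)+1)),
      abs_of_nonneg (phi_nonneg N (le_of_lt h0))]
    calc 1/((N:ℝ)+1) * phi N s ≤ 1 * phi N s :=
      mul_le_mul_of_nonneg_right (inv_N1_le_one N) (phi_nonneg N (le_of_lt h0))
    _ = phi N s := by ring
    _ ≤ s := phi_le_s N (le_of_lt h0) h1
    _ ≤ 1 := h1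
  calc |z0 N s * (s * Real.log s) * q N s / (P N s)^2 + 1/((N:ℝ)+1) * phi N s|
      ≤ |z0 N s * (s * Real.log s) * q N s / (P N s)^2| + |1/((N:ℝ)+1) * phi N s| := abs_add_le _ _
  _ ≤ 2 := by linarith

lemma B_bound_small {r : ℝ} (h0 : 0 < r) (h1 : r ≤ 1) : |B N r| ≤ r^2 := by
  have h := intervalIntegral.norm_integral_le_of_norm_le_const
    (C := r) (f := fun s => z0 N s * phi N s) (a := (0:ℝ)) (b := r) ?_
  · rw [B, ← Real.norm_eq_abs]
    calc ‖∫ s in (0:ℝ)..r, z0 N s * phi N s‖ ≤ r * |r - 0| := h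
    _ = r^2 := by rw [sub_zero, abs_of_pos h0]; ring
  · intro s hs
    rw [Set.uIoc_of_le (le_of_lt h0)] at hs
    obtain ⟨hs0, hsr⟩ := hs
    rw [Real.norm_eq_abs, abs_mul]
    calc |z0 N s| * |phi N s| ≤ 1 * |phi N s| :=
      mul_le_mul_of_nonneg_right (abs_z0_le N s) (abs_nonneg _)
    _ = phi N s := by rw [one_mul, abs_of_nonneg (phi_nonneg N (le_of_lt hs0))]
    _ ≤ s := phi_le_s N (le_of_lt hs0) (le_trans hsr h1)
    _ ≤ r := hsr

lemma A_bound_small {r : ℝ} (h0 : 0 < r) (h1 : r ≤ 1) : |A N r| ≤ 2*r := by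
  have h := intervalIntegral.norm_integral_le_of_norm_le_const
    (C := 2) (f := psi N) (a := (0:ℝ)) (b := r) ?_
  · rw [A, ← Real.norm_eq_abs]
    calc ‖∫ s in (0:ℝ)..r, psi N s‖ ≤ 2 * |r - 0| := h
    _ = 2*r := by rw [sub_zero, abs_of_pos h0]
  · intro s hs
    rw [Set.uIoc_of_le (le_of_lt h0)] at hs
    exact le_trans (le_of_eq (Real.norm_eq_abs _)) (abs_psi_le_two N hs.1 (le_trans hs.2 h1))

lemma abs_z1_le {r : ℝ} : |z1 N r| ≤ |Real.log r| + 1 := by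
  rw [z1]
  calc |z0 N r * Real.log r + 1/((N:ℝ)+1)| ≤ |z0 N r * Real.log r| + |1/((N:ℝ)+1)| := abs_add_le _ _
  _ ≤ |Real.log r| + 1 := by
      rw [abs_mul]
      have h1 := abs_z0_le N r
      have h2 : |1/((N:ℝ)+1)| ≤ 1 := by
        rw [abs_of_nonneg (by positivity)]; exact inv_N1_le_one N
      have h3 := abs_nonneg (Real.log r)
      nlinarith

lemma c_bound_small {r : ℝ} (h0 : 0 < r) (h1 : r ≤ 1) : |c N ε r| ≤ 4 * ε^2 * r := by
  rw [c]
  have hA := A_bound_small N h0 h1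
  have hB := B_bound_small N h0 h1
  have hz1 := abs_z1_le N (r := r)
  have hrlog : r * |Real.log r| ≤ 1 := slog_le_one h0 h1
  have key : |z0 N r * A N r - z1 N r * B N r| ≤ 4 * r := by
    calc |z0 N r * A N r - z1 N r * B N r| ≤ |z0 N r * A N r| + |z1 N r * B N r| := abs_sub _ _
    _ = |z0 N r| * |A N r| + |z1 N r| * |B N r| := by rw [abs_mul, abs_mul]
    _ ≤ 1 * (2*r) + (|Real.log r| + 1) * r^2 := by
        apply add_le_add
        · exact mul_le_mul (abs_z0_le N r) hA (abs_nonneg _) zero_le_one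
        · exact mul_le_mul hz1 hB (abs_nonneg _) (by positivity)
    _ = 2*r + r * (r * |Real.log r|) + r^2 := by ring
    _ ≤ 2*r + r * 1 + r * 1 := by
        apply add_le_add (add_le_add le_rfl (mul_le_mul_of_nonneg_left hrlog h0.le))
        nlinarith
    _ = 4 * r := by ring
  rw [abs_mul, abs_of_nonneg (sq_nonneg ε)]
  calc ε^2 * |z0 N r * A N r - z1 N r * B N r| ≤ ε^2 * (4*r) :=
    mul_le_mul_of_nonneg_left key (sq_nonneg ε)
  _ = 4 * ε^2 * r := by ring

lemma q_le_r2 {r : ℝ} (h0 : 0 ≤ r) (h1 : r ≤ 1) : q N r ≤ r^2 := by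
  rw [q, show 2*N+2 = 2*N+2 from rfl]
  calc r ^ (2*N+2) = r^(2*N) * r^2 := by ring
  _ ≤ 1 * r^2 := by
      apply mul_le_mul_of_nonneg_right (pow_le_one₀ h0 h1) (by positivity)
  _ = r^2 := by ring

lemma abs_z0d_le_small {r : ℝ} (h0 : 0 < r) (h1 : r ≤ 1) : |z0d N r| ≤ 2 * kk N * r := by
  have hkk : (0:ℝ) < kk N := by rw [kk]; positivity
  rw [z0d]
  have hpos : (0:ℝ) < r * (P N r)^2 := mul_pos h0 (pow_pos (P_pos N r) 2)
  rw [abs_div, abs_of_pos hpos]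
  rw [div_le_iff₀ hpos]
  have hq2 : q N r ≤ r^2 := q_le_r2 N h0.le h1
  have hP := one_le_P N r
  have hP2 : (1:ℝ) ≤ (P N r)^2 := by nlinarith
  have habs : |(-2 * kk N * q N r)| = 2 * kk N * q N r := by
    rw [abs_of_nonpos (by nlinarith [q_nonneg N r])]; ring
  rw [habs]
  calc 2 * kk N * q N r ≤ 2 * kk N * r^2 := by nlinarith
  _ ≤ 2 * kk N * r * (r * (P N r)^2) := by
      nlinarith [mul_le_mul_of_nonneg_left hP2 (by positivity : (0:ℝ) ≤ 2 * kk N * r^2)]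

lemma cd_bound_small {r : ℝ} (h0 : 0 < r) (h1 : r ≤ 1) :
    |cd N ε r| ≤ ε^2 * (6 * kk N + 1) * r := by
  have hkk : (0:ℝ) < kk N := by rw [kk]; positivity
  have hA := A_bound_small N h0 h1
  have hB := B_bound_small N h0 h1
  have hz0d := abs_z0d_le_small N h0 h1
  have hrlog : r * |Real.log r| ≤ 1 := slog_le_one h0 h1
  have hz1dB : |z1d N r| * |B N r| ≤ 2 * kk N * r^2 + r := by
    rw [z1d]
    have step : |z0d N r * Real.log r + z0 N r / r| ≤ 2 * kk N + 1/r := by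
      calc |z0d N r * Real.log r + z0 N r / r| ≤ |z0d N r| * |Real.log r| + |z0 N r| / r := by
            rw [← abs_mul]
            refine le_trans (abs_add_le _ _) (add_le_add le_rfl ?_)
            rw [abs_div, abs_of_pos h0]
      _ ≤ 2 * kk N + 1/r := by
          apply add_le_add
          · calc |z0d N r| * |Real.log r| ≤ (2 * kk N * r) * |Real.log r| :=
                mul_le_mul_of_nonneg_right hz0d (abs_nonneg _)
            _ = 2 * kk N * (r * |Real.log r|) := by ring
            _ ≤ 2 * kk N * 1 := mul_le_mul_of_nonneg_left hrlog (by positivity)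
            _ = 2 * kk N := by ring
          · apply div_le_div_of_nonneg_right (abs_z0_le N r) h0.le
    calc |z1d N r| * |B N r| ≤ (2 * kk N + 1/r) * r^2 := by
          apply mul_le_mul step hB (abs_nonneg _) (by positivity)
    _ = 2 * kk N * r^2 + r := by field_simp
  rw [cd, abs_mul, abs_of_nonneg (sq_nonneg ε)]
  have key : |z0d N r * A N r - z1d N r * B N r| ≤ (6 * kk N + 1) * r := by
    calc |z0d N r * A N r - z1d N r * B N r| ≤ |z0d N r| * |A N r| + |z1d N r| * |B N r| := by
          rw [← abs_mul, ← abs_mul]; exact abs_sub _ _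
    _ ≤ (2 * kk N * r) * (2*r) + (2 * kk N * r^2 + r) := by
        apply add_le_add _ hz1dB
        exact mul_le_mul hz0d hA (abs_nonneg _) (by positivity)
    _ ≤ (6 * kk N + 1) * r := by
        have hr2 : r^2 ≤ r := by nlinarith
        have := mul_le_mul_of_nonneg_left hr2 (by positivity : (0:ℝ) ≤ 6 * kk N)
        nlinarith
  calc ε^2 * |z0d N r * A N r - z1d N r * B N r| ≤ ε^2 * ((6 * kk N + 1) * r) :=
    mul_le_mul_of_nonneg_left key (sq_nonneg ε)
  _ = ε^2 * (6 * kk N + 1) * r := by ring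

lemma tendsto_c_zero : Tendsto (c N ε) (nhdsWithin 0 (Set.Ioi 0)) (nhds 0) := by
  have hev : ∀ᶠ r in nhdsWithin (0:ℝ) (Set.Ioi 0), ‖c N ε r‖ ≤ 4 * ε^2 * r := by
    filter_upwards [Ioo_mem_nhdsGT_of_mem (Set.mem_Ico.mpr ⟨le_refl (0:ℝ), one_pos⟩)] with r hr
    exact c_bound_small N ε hr.1 hr.2.le
  have htend : Tendsto (fun r : ℝ => 4 * ε^2 * r) (nhdsWithin (0:ℝ) (Set.Ioi 0)) (nhds 0) := by
    have h2 : Tendsto (fun r : ℝ => 4 * ε^2 * r) (nhds 0) (nhds (4 * ε^2 * 0)) :=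
      (continuous_const.mul continuous_id).tendsto 0
    rw [mul_zero] at h2
    exact h2.mono_left nhdsWithin_le_nhds
  exact squeeze_zero_norm' hev htend

lemma tendsto_deriv_c_zero : Tendsto (deriv (c N ε)) (nhdsWithin 0 (Set.Ioi 0)) (nhds 0) := by
  have hcong : deriv (c N ε) =ᶠ[nhdsWithin 0 (Set.Ioi 0)] cd N ε :=
    Filter.eventuallyEq_of_mem self_mem_nhdsWithin (deriv_c_eq N ε)
  rw [Filter.tendsto_congr' hcong]
  have hev : ∀ᶠ r in nhdsWithin (0:ℝ) (Set.Ioi 0), ‖cd N ε r‖ ≤ ε^2 * (6 * kk N + 1) * r := by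
    filter_upwards [Ioo_mem_nhdsGT_of_mem (Set.mem_Ico.mpr ⟨le_refl (0:ℝ), one_pos⟩)] with r hr
    exact cd_bound_small N ε hr.1 hr.2.le
  have htend : Tendsto (fun r : ℝ => ε^2 * (6 * kk N + 1) * r) (nhdsWithin (0:ℝ) (Set.Ioi 0)) (nhds 0) := by
    have h2 : Tendsto (fun r : ℝ => ε^2 * (6 * kk N + 1) * r) (nhds 0)
        (nhds (ε^2 * (6 * kk N + 1) * 0)) :=
      (continuous_const.mul continuous_id).tendsto 0
    rw [mul_zero] at h2
    exact h2.mono_left nhdsWithin_le_nhds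
  exact squeeze_zero_norm' hev htend

lemma B_split {r : ℝ} : B N r = B N 1 + ∫ s in (1:ℝ)..r, z0 N s * phi N s := by
  rw [B, B]
  rw [← intervalIntegral.integral_add_adjacent_intervals
    ((continuous_z0phi N).intervalIntegrable 0 1) ((continuous_z0phi N).intervalIntegrable 1 r)]

lemma A_split {r : ℝ} : A N r = A N 1 + ∫ s in (1:ℝ)..r, psi N s := by
  rw [A, A]
  rw [← intervalIntegral.integral_add_adjacent_intervals
    ((continuous_psi N).intervalIntegrable 0 1) ((continuous_psi N).intervalIntegrable 1 r)]

lemma integral_inv_bound {r : ℝ} (h1 : 1 ≤ r) : ∫ s in (1:ℝ)..r, s⁻¹ = Real.log r := by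
  rw [integral_inv (by
    rw [Set.uIcc_of_le h1]
    intro h
    exact absurd (Set.mem_Icc.mp h).1 (by norm_num))]
  simp

lemma contOn_inv_Icc {r : ℝ} (h1 : 1 ≤ r) :
    IntervalIntegrable (fun s : ℝ => s⁻¹) volume 1 r := by
  apply ContinuousOn.intervalIntegrable
  apply ContinuousOn.inv₀ continuousOn_id
  intro x hx
  rw [Set.uIcc_of_le h1] at hx
  exact ne_of_gt (lt_of_lt_of_le one_pos (Set.mem_Icc.mp hx).1 |>.trans_le' (by norm_num))

lemma B_bound_large {r : ℝ} (h1 : 1 ≤ r) : |B N r| ≤ 1 + Real.log r := by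
  rw [B_split N]
  have hB1 : |B N 1| ≤ 1 := by
    have := B_bound_small N one_pos le_rfl
    simpa using this
  have hint : |∫ s in (1:ℝ)..r, z0 N s * phi N s| ≤ Real.log r := by
    rw [← Real.norm_eq_abs]
    calc ‖∫ s in (1:ℝ)..r, z0 N s * phi N s‖
        ≤ ∫ s in (1:ℝ)..r, ‖z0 N s * phi N s‖ :=
          intervalIntegral.norm_integral_le_integral_norm h1
    _ ≤ ∫ s in (1:ℝ)..r, s⁻¹ := by
        apply intervalIntegral.integral_mono_on h1
          (((continuous_z0phi N).norm).intervalIntegrable 1 r) (contOn_inv_Icc h1)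
        intro s hs
        obtain ⟨hs1, hsr⟩ := Set.mem_Icc.mp hs
        have hs0 : (0:ℝ) < s := lt_of_lt_of_le one_pos hs1
        rw [Real.norm_eq_abs, abs_mul]
        calc |z0 N s| * |phi N s| ≤ 1 * |phi N s| :=
          mul_le_mul_of_nonneg_right (abs_z0_le N s) (abs_nonneg _)
        _ = phi N s := by rw [one_mul, abs_of_nonneg (phi_nonneg N hs0.le)]
        _ ≤ 1/s := phi_le_inv N hs1
        _ = s⁻¹ := one_div s
    _ = Real.log r := integral_inv_bound h1
  calc |B N 1 + ∫ s in (1:ℝ)..r, z0 N s * phi N s|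
      ≤ |B N 1| + |∫ s in (1:ℝ)..r, z0 N s * phi N s| := abs_add_le _ _
  _ ≤ 1 + Real.log r := add_le_add hB1 hint

lemma abs_psi_le_large {s r : ℝ} (hs1 : 1 ≤ s) (hsr : s ≤ r) :
    |psi N s| ≤ (Real.log r + 1) * s⁻¹ := by
  have hs0 : (0:ℝ) < s := lt_of_lt_of_le one_pos hs1
  have hlog0 : 0 ≤ Real.log s := Real.log_nonneg hs1
  have hlogr : Real.log s ≤ Real.log r := Real.log_le_log hs0 hsr
  have hq1 : (1:ℝ) ≤ q N s := le_trans (by nlinarith) (sq_le_q N hs1)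
  have hqP : q N s / (P N s)^2 ≤ 1 / q N s := by
    have hP2 : q N s ^ 2 ≤ (P N s)^2 := by
      apply pow_le_pow_left₀ (by linarith) (q_le_P N s)
    calc q N s / (P N s)^2 ≤ q N s / (q N s)^2 := by
          apply div_le_div_of_nonneg_left (by linarith) (by positivity) hP2
    _ = 1 / q N s := by field_simp
  have hfirst : |z0 N s * (s * Real.log s) * q N s / (P N s)^2| ≤ Real.log r * s⁻¹ := by
    rw [abs_div, abs_of_pos (pow_pos (P_pos N s) 2)]
    rw [abs_mul, abs_mul]
    have e1 : |s * Real.log s| = s * Real.log s := abs_of_nonneg (by positivity)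
    have e2 : |q N s| = q N s := abs_of_nonneg (q_nonneg N s)
    rw [e1, e2]
    calc |z0 N s| * (s * Real.log s) * q N s / (P N s)^2
        ≤ 1 * (s * Real.log s) * q N s / (P N s)^2 := by
          apply div_le_div_of_nonneg_right _ (pow_nonneg (P_pos N s).le 2)
          apply mul_le_mul_of_nonneg_right _ (q_nonneg N s)
          exact mul_le_mul_of_nonneg_right (abs_z0_le N s) (by positivity)
    _ = (s * Real.log s) * (q N s / (P N s)^2) := by ring
    _ ≤ (s * Real.log s) * (1 / q N s) := by
          apply mul_le_mul_of_nonneg_left hqP (by positivity)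
    _ ≤ (s * Real.log s) * (1 / s^2) := by
          apply mul_le_mul_of_nonneg_left _ (by positivity)
          apply div_le_div_of_nonneg_left zero_le_one (by positivity) (sq_le_q N hs1)
    _ = Real.log s * s⁻¹ := by field_simp
    _ ≤ Real.log r * s⁻¹ := by
          apply mul_le_mul_of_nonneg_right hlogr (by positivity)
  have hsecond : |1/((N:ℝ)+1) * phi N s| ≤ s⁻¹ := by
    rw [abs_mul, abs_of_nonneg (by positivity : (0:ℝ) ≤ 1/((N:ℝ)+1)),
      abs_of_nonneg (phi_nonneg N hs0.le)]
    calc 1/((N:ℝ)+1) * phi N s ≤ 1 * phi N s :=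
      mul_le_mul_of_nonneg_right (inv_N1_le_one N) (phi_nonneg N hs0.le)
    _ = phi N s := by ring
    _ ≤ 1/s := phi_le_inv N hs1
    _ = s⁻¹ := one_div s
  rw [psi]
  calc |z0 N s * (s * Real.log s) * q N s / (P N s)^2 + 1/((N:ℝ)+1) * phi N s|
      ≤ |z0 N s * (s * Real.log s) * q N s / (P N s)^2| + |1/((N:ℝ)+1) * phi N s| := abs_add_le _ _
  _ ≤ Real.log r * s⁻¹ + s⁻¹ := add_le_add hfirst hsecond
  _ = (Real.log r + 1) * s⁻¹ := by ring

lemma A_bound_large {r : ℝ} (h1 : 1 ≤ r) : |A N r| ≤ 2 + (Real.log r + 1) * Real.log r := by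
  rw [A_split N]
  have hA1 : |A N 1| ≤ 2 := by
    have := A_bound_small N one_pos le_rfl
    simpa using this
  have hint : |∫ s in (1:ℝ)..r, psi N s| ≤ (Real.log r + 1) * Real.log r := by
    rw [← Real.norm_eq_abs]
    calc ‖∫ s in (1:ℝ)..r, psi N s‖
        ≤ ∫ s in (1:ℝ)..r, ‖psi N s‖ := intervalIntegral.norm_integral_le_integral_norm h1
    _ ≤ ∫ s in (1:ℝ)..r, (Real.log r + 1) * s⁻¹ := by
        apply intervalIntegral.integral_mono_on h1
          (((continuous_psi N).norm).intervalIntegrable 1 r)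
          ((contOn_inv_Icc h1).const_mul _)
        intro s hs
        obtain ⟨hs1, hsr⟩ := Set.mem_Icc.mp hs
        rw [Real.norm_eq_abs]
        exact abs_psi_le_large N hs1 hsr
    _ = (Real.log r + 1) * Real.log r := by
        rw [intervalIntegral.integral_const_mul, integral_inv_bound h1]
  calc |A N 1 + ∫ s in (1:ℝ)..r, psi N s|
      ≤ |A N 1| + |∫ s in (1:ℝ)..r, psi N s| := abs_add_le _ _
  _ ≤ 2 + (Real.log r + 1) * Real.log r := add_le_add hA1 hint

lemma one_le_log {r : ℝ} (h1 : 1 ≤ r) : 1 ≤ Real.log (2 + r) := by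
  rw [Real.le_log_iff_exp_le (by linarith)]
  calc Real.exp 1 ≤ 2.7182818286 := (Real.exp_one_lt_d9).le
  _ ≤ 2 + r := by linarith

lemma c_bound_large {r : ℝ} (h1 : 1 ≤ r) : |c N ε r| ≤ 16 * ε^2 * Real.log (2+r)^2 := by
  have hr0 : (0:ℝ) < r := lt_of_lt_of_le one_pos h1
  set L := Real.log r with hL
  set M := Real.log (2+r) with hM
  have hL0 : 0 ≤ L := Real.log_nonneg h1
  have hM1 : 1 ≤ M := one_le_log h1
  have hLM : L ≤ M := Real.log_le_log hr0 (by linarith)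
  have hA := A_bound_large N h1
  have hB := B_bound_large N h1
  have hz1 : |z1 N r| ≤ L + 1 := by
    have := abs_z1_le N (r := r)
    rwa [abs_of_nonneg (Real.log_nonneg h1)] at this
  have key : |z0 N r * A N r - z1 N r * B N r| ≤ 16 * M^2 := by
    calc |z0 N r * A N r - z1 N r * B N r| ≤ |z0 N r| * |A N r| + |z1 N r| * |B N r| := by
          rw [← abs_mul, ← abs_mul]; exact abs_sub _ _
    _ ≤ 1 * (2 + (L + 1) * L) + (L + 1) * (1 + L) := by
        apply add_le_add
        · exact mul_le_mul (abs_z0_le N r) hA (abs_nonneg _) zero_le_one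
        · exact mul_le_mul hz1 hB (abs_nonneg _) (by positivity)
    _ ≤ 16 * M^2 := by nlinarith
  rw [c, abs_mul, abs_of_nonneg (sq_nonneg ε)]
  calc ε^2 * |z0 N r * A N r - z1 N r * B N r| ≤ ε^2 * (16 * M^2) :=
    mul_le_mul_of_nonneg_left key (sq_nonneg ε)
  _ = 16 * ε^2 * M^2 := by ring

lemma half_le_log2 : (1/2:ℝ) ≤ Real.log 2 := by
  have h := Real.log_le_sub_one_of_pos (by norm_num : (0:ℝ) < 1/2)
  rw [show (1/2:ℝ) = 2⁻¹ by norm_num, Real.log_inv] at h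
  linarith

lemma c_bound_all {r : ℝ} (h0 : 0 < r) : |c N ε r| ≤ 100 * ε^2 * Real.log (2+r)^2 := by
  have hM : (1/2:ℝ) ≤ Real.log (2+r) := by
    calc (1/2:ℝ) ≤ Real.log 2 := half_le_log2
    _ ≤ Real.log (2+r) := Real.log_le_log two_pos (by linarith)
  rcases le_or_gt r 1 with h1 | h1
  · have := c_bound_small N ε h0 h1
    have h2 : 4 * ε^2 * r ≤ 4 * ε^2 := by nlinarith [sq_nonneg ε]
    have h3 : 4 * ε^2 ≤ 100 * ε^2 * Real.log (2+r)^2 := by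
      have hM2 : (1/4:ℝ) ≤ Real.log (2+r)^2 := by nlinarith
      nlinarith [mul_le_mul_of_nonneg_left hM2 (by positivity : (0:ℝ) ≤ 100*ε^2), sq_nonneg ε]
    linarith
  · have := c_bound_large N ε h1.le
    have h4 : 16 * ε^2 * Real.log (2+r)^2 ≤ 100 * ε^2 * Real.log (2+r)^2 := by
      nlinarith [mul_nonneg (sq_nonneg ε) (sq_nonneg (Real.log (2+r)))]
    linarith

end
end Stmt15



open Filter Topology

/-- solvability of the radial forced linearized equation at the
standard bubble of the quantized singular Liouville equation, on `(0, ε⁻¹)`,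
with forcing `-ε² r^{2N+2}(1+r^{2N+2})^{-2}`, vanishing value and derivative at
the origin, and bound `Cε²(log(2+r))²`. -/
theorem stmt15 (N : ℕ) :
    ∃ C : ℝ, 0 < C ∧
      ∀ ε : ℝ, 0 < ε → ε < 1 →
        ∃ c : ℝ → ℝ, ContDiffOn ℝ 2 c (Set.Ioo 0 ε⁻¹) ∧
          (∀ r : ℝ, 0 < r → r < ε⁻¹ →
            deriv (deriv c) r + deriv c r / r
              + 8 * (N + 1 : ℝ) ^ 2 * r ^ (2 * N) / (1 + r ^ (2 * N + 2)) ^ 2 * c r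
            = -(ε ^ 2) * r ^ (2 * N + 2) / (1 + r ^ (2 * N + 2)) ^ 2) ∧
          Tendsto c (nhdsWithin 0 (Set.Ioi 0)) (nhds 0) ∧
          Tendsto (deriv c) (nhdsWithin 0 (Set.Ioi 0)) (nhds 0) ∧
          (∀ r : ℝ, 0 < r → r < ε⁻¹ →
            |c r| ≤ C * ε ^ 2 * Real.log (2 + r) ^ 2) := by
  refine ⟨100, by norm_num, fun ε hε hε1 => ⟨Stmt15.c N ε, ?_, ?_, ?_, ?_, ?_⟩⟩
  · exact (Stmt15.contDiffOn_c N ε).mono Set.Ioo_subset_Ioi_self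
  · intro r hr hr'
    have h1 : deriv (deriv (Stmt15.c N ε)) r = Stmt15.cdd N ε r := Stmt15.deriv2_c N ε hr
    have h2 : deriv (Stmt15.c N ε) r = Stmt15.cd N ε r :=
      Stmt15.deriv_c_eq N ε (Set.mem_Ioi.mpr hr)
    rw [h1, h2]
    have hode := Stmt15.ode N ε r hr
    have hW : Stmt15.W N r = 8 * ((N:ℝ) + 1) ^ 2 * r ^ (2 * N) / (1 + r ^ (2 * N + 2)) ^ 2 := rfl
    rw [hW] at hode
    exact hode
  · exact Stmt15.tendsto_c_zero N ε
  · exact Stmt15.tendsto_deriv_c_zero N ε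
  · intro r hr hr'
    exact Stmt15.c_bound_all N ε hr
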